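/- Suppose I is a κ-complete ideal over κ such that P(κ)/I is a complete Boolean algebra, γ ≤ κ, and A is a maximal antichain with respect to I together with an assignment A ↦ ξ_A ∈ γ. Then there exists a partition {B_ξ : ξ < γ} of κ such that for each ξ < γ, [B_ξ]_I = ⋁{[A]_I : A ∈ A, ξ_A = ξ} in P(κ)/I. -/

import Mathlib

universe u

/-- A proper, κ-complete ideal on `P(κ)` (κ realized as the type `α`)
containing all singletons. -/
structure IdealOver (α : Type u) where
  carrier : Set (Set α)
  proper : Set.univ ∉ carrier
  downward : ∀ {A B : Set α}, A ⊆ B → B ∈ carrier → A ∈ carrier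
  singleton_mem : ∀ x : α, {x} ∈ carrier
  complete : ∀ s : Set (Set α), Cardinal.mk ↥s < Cardinal.mk α → s ⊆ carrier →
    ⋃₀ s ∈ carrier

/-- `𝒜` is an antichain with respect to `I`. -/
def IsAntichainFor {α : Type u} (I : IdealOver α) (𝒜 : Set (Set α)) : Prop :=
  (∀ A ∈ 𝒜, A ∉ I.carrier) ∧ ∀ A ∈ 𝒜, ∀ B ∈ 𝒜, A ≠ B → A ∩ B ∈ I.carrier

/-- `[Z]` is a least upper bound of `{[A] : A ∈ F}` in `P(α)/I`, where
`[A] ≤ [B]` iff `A \ B ∈ I`. -/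
def IsSupFor {α : Type u} (I : IdealOver α) (F : Set (Set α)) (Z : Set α) : Prop :=
  (∀ A ∈ F, A \ Z ∈ I.carrier) ∧
    ∀ W : Set α, (∀ A ∈ F, A \ W ∈ I.carrier) → Z \ W ∈ I.carrier

/-- The quotient Boolean algebra `P(α)/I` is complete. -/
def QuotComplete {α : Type u} (I : IdealOver α) : Prop :=
  ∀ F : Set (Set α), ∃ Z : Set α, IsSupFor I F Z

/-- Over an infinite `α`, the carrier is closed under pairwise unions. -/
lemma IdealOver.union_mem {α : Type u} (I : IdealOver α)
    (hinf : Cardinal.aleph0 ≤ Cardinal.mk α) {A B : Set α}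
    (hA : A ∈ I.carrier) (hB : B ∈ I.carrier) : A ∪ B ∈ I.carrier := by
  have h : A ∪ B = ⋃₀ {A, B} := (Set.sUnion_pair A B).symm
  rw [h]
  apply I.complete
  · exact lt_of_lt_of_le (Set.Finite.lt_aleph0 (Set.toFinite _)) hinf
  · rintro X hX
    rcases hX with rfl | rfl
    · exact hA
    · exact hB

/-- given a maximal antichain `𝒜` with respect to `I` together
with an assignment `f : 𝒜 → ι` (with `#ι ≤ κ`, playing the role of `γ ≤ κ`),
there is a partition `{B ξ : ξ ∈ ι}` of `κ` such that `[B ξ]` is the supremum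
of `{[A] : A ∈ 𝒜, f A = ξ}` in `P(κ)/I`. -/
theorem stmt4 {α ι : Type u} (I : IdealOver α) (hcomp : QuotComplete I)
    (hι : Cardinal.mk ι ≤ Cardinal.mk α)
    (𝒜 : Set (Set α)) (hanti : IsAntichainFor I 𝒜)
    (hmax : ∀ Z : Set α, (∀ A ∈ 𝒜, A \ Z ∈ I.carrier) → Set.univ \ Z ∈ I.carrier)
    (f : Set α → ι) :
    ∃ B : ι → Set α,
      (Set.univ = ⋃ ξ, B ξ) ∧
      (Pairwise fun ξ ζ => Disjoint (B ξ) (B ζ)) ∧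
      ∀ ξ : ι, IsSupFor I {A | A ∈ 𝒜 ∧ f A = ξ} (B ξ) := by
  classical
  -- α is nonempty
  have hne : Nonempty α := by
    by_contra h
    rw [not_nonempty_iff] at h
    obtain ⟨Z, hZ⟩ := hcomp {Set.univ}
    have h1 : Set.univ \ Z ∈ I.carrier := hZ.1 _ rfl
    have h2 : Set.univ \ Z = Set.univ := by
      ext x; exact h.elim x
    exact I.proper (h2 ▸ h1)
  have hempty : (∅ : Set α) ∈ I.carrier :=
    I.downward (Set.empty_subset _) (I.singleton_mem hne.some)
  by_cases hinf : Cardinal.aleph0 ≤ Cardinal.mk α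
  · -- infinite case
    choose Z hZ using fun ξ => hcomp {A | A ∈ 𝒜 ∧ f A = ξ}
    -- key fact: a member of the antichain with label ξ almost avoids Z ζ for ζ ≠ ξ
    have key : ∀ ξ ζ : ι, ξ ≠ ζ → ∀ A, A ∈ 𝒜 → f A = ξ → A ∩ Z ζ ∈ I.carrier := by
      intro ξ ζ hξζ A hA hfA
      have h1 : Z ζ \ Aᶜ ∈ I.carrier := by
        apply (hZ ζ).2
        rintro B ⟨hB, hfB⟩
        have hAB : A ≠ B := by
          rintro rfl; exact hξζ (hfA ▸ hfB ▸ rfl)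
        refine I.downward ?_ (hanti.2 A hA B hB hAB)
        intro x hx
        exact ⟨not_not.mp hx.2, hx.1⟩
      refine I.downward ?_ h1
      intro x hx
      exact ⟨hx.2, not_not.mpr hx.1⟩
    obtain ⟨r, wo, hr⟩ := Cardinal.ord_eq ι
    haveI := wo
    obtain ⟨ξ₀⟩ : Nonempty ι := ⟨f ∅⟩
    set R : Set α := Set.univ \ ⋃ ξ, Z ξ with hRdef
    have hRmem : R ∈ I.carrier := by
      apply hmax
      intro A hA
      refine I.downward ?_ ((hZ (f A)).1 A ⟨hA, rfl⟩)
      intro x hx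
      exact ⟨hx.1, fun hc => hx.2 (Set.mem_iUnion.2 ⟨f A, hc⟩)⟩
    set C : ι → Set α := fun ξ => Z ξ \ ⋃ ζ ∈ {ζ | r ζ ξ}, Z ζ with hCdef
    set B : ι → Set α := fun ξ => C ξ ∪ (if ξ = ξ₀ then R else ∅) with hBdef
    have hCZ : ∀ ξ, C ξ ⊆ Z ξ := fun ξ x hx => hx.1
    have hZR : ∀ ξ, ∀ x, x ∈ Z ξ → x ∉ R := by
      intro ξ x hx hxR
      exact hxR.2 (Set.mem_iUnion.2 ⟨ξ, hx⟩)
    refine ⟨B, ?_, ?_, ?_⟩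
    · -- covers
      refine (Set.eq_univ_of_forall ?_).symm
      intro x
      by_cases hx : x ∈ ⋃ ξ, Z ξ
      · set S : Set ι := {ξ | x ∈ Z ξ} with hSdef
        have hS : S.Nonempty := by
          obtain ⟨ξ, hξ⟩ := Set.mem_iUnion.1 hx
          exact ⟨ξ, hξ⟩
        have hwf : WellFounded r := wo.wf
        set m := hwf.min S hS with hm
        refine Set.mem_iUnion.2 ⟨m, Or.inl ⟨hwf.min_mem S hS, ?_⟩⟩
        intro hmem
        obtain ⟨ζ, hζ⟩ := Set.mem_iUnion.1 hmem
        obtain ⟨hζ1, hζ2⟩ := Set.mem_iUnion.1 hζ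
        exact hwf.not_lt_min S hζ2 hζ1
      · refine Set.mem_iUnion.2 ⟨ξ₀, Or.inr ?_⟩
        simp only [if_pos rfl]
        exact ⟨trivial, hx⟩
    · -- pairwise disjoint
      intro ξ ζ hξζ
      rw [Set.disjoint_left]
      have hCC : ∀ ξ' ζ' : ι, r ξ' ζ' → ∀ x, x ∈ C ξ' → x ∉ C ζ' := by
        intro ξ' ζ' hlt x hx hx'
        exact hx'.2 (Set.mem_iUnion.2 ⟨ξ', Set.mem_iUnion.2 ⟨hlt, hx.1⟩⟩)
      intro x hx hx'
      have hxC : x ∈ C ξ ∨ (ξ = ξ₀ ∧ x ∈ R) := by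
        rcases hx with h | h
        · exact Or.inl h
        · by_cases hc : ξ = ξ₀
          · rw [if_pos hc] at h; exact Or.inr ⟨hc, h⟩
          · rw [if_neg hc] at h; exact absurd h (Set.notMem_empty x)
      have hxC' : x ∈ C ζ ∨ (ζ = ξ₀ ∧ x ∈ R) := by
        rcases hx' with h | h
        · exact Or.inl h
        · by_cases hc : ζ = ξ₀
          · rw [if_pos hc] at h; exact Or.inr ⟨hc, h⟩
          · rw [if_neg hc] at h; exact absurd h (Set.notMem_empty x)
      rcases hxC with h1 | ⟨he1, h1⟩ <;> rcases hxC' with h2 | ⟨he2, h2⟩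
      · rcases trichotomous_of r ξ ζ with hlt | heq | hgt
        · exact hCC ξ ζ hlt x h1 h2
        · exact hξζ heq
        · exact hCC ζ ξ hgt x h2 h1
      · exact hZR ξ x (hCZ ξ h1) h2
      · exact hZR ζ x (hCZ ζ h2) h1
      · exact hξζ (he1.trans he2.symm)
    · -- sup
      intro ξ
      constructor
      · rintro A ⟨hA, hfA⟩
        have h1 : A \ Z ξ ∈ I.carrier := (hZ ξ).1 A ⟨hA, hfA⟩
        have h2 : ⋃₀ ((fun ζ => A ∩ Z ζ) '' {ζ | r ζ ξ}) ∈ I.carrier := by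
          apply I.complete
          · refine lt_of_le_of_lt Cardinal.mk_image_le ?_
            refine lt_of_lt_of_le ?_ hι
            have := Cardinal.card_typein_lt (r := r) ξ hr
            exact (Ordinal.card_typein (r := r) ξ).trans_lt this
          · rintro X ⟨ζ, hζ, rfl⟩
            have hξζ : ξ ≠ ζ := by
              rintro rfl
              exact irrefl ξ hζ
            exact key ξ ζ hξζ A hA hfA
        refine I.downward ?_ (I.union_mem hinf h1 h2)
        intro x hx
        have hxB : x ∉ C ξ := fun hc => hx.2 (Or.inl hc)
        by_cases hxZ : x ∈ Z ξ
        · have : x ∈ ⋃ ζ ∈ {ζ | r ζ ξ}, Z ζ := by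
            by_contra hc
            exact hxB ⟨hxZ, hc⟩
          obtain ⟨ζ, hζ⟩ := Set.mem_iUnion.1 this
          obtain ⟨hζ1, hζ2⟩ := Set.mem_iUnion.1 hζ
          exact Or.inr ⟨A ∩ Z ζ, ⟨ζ, hζ1, rfl⟩, ⟨hx.1, hζ2⟩⟩
        · exact Or.inl ⟨hx.1, hxZ⟩
      · intro W hW
        have h1 : Z ξ \ W ∈ I.carrier := (hZ ξ).2 W hW
        refine I.downward ?_ (I.union_mem hinf h1 hRmem)
        intro x hx
        rcases hx.1 with h | h
        · exact Or.inl ⟨hCZ ξ h, hx.2⟩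
        · by_cases hc : ξ = ξ₀
          · rw [if_pos hc] at h; exact Or.inr h
          · rw [if_neg hc] at h; exact absurd h (Set.notMem_empty x)
  · -- finite case
    rw [not_le, Cardinal.lt_aleph0_iff_finite] at hinf
    haveI : Finite α := hinf
    haveI : Fintype α := Fintype.ofFinite α
    -- every proper subset of α belongs to the ideal
    have hproper : ∀ A : Set α, A ≠ Set.univ → A ∈ I.carrier := by
      intro A hA
      obtain ⟨x, hx⟩ : ∃ x, x ∉ A := by
        by_contra h
        push_neg at h
        exact hA (Set.eq_univ_of_forall h)
      have hsub : A ⊆ ⋃₀ ((fun y => ({y} : Set α)) '' {x}ᶜ) := by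
        intro y hy
        exact ⟨{y}, ⟨y, fun h => hx (h ▸ hy), rfl⟩, rfl⟩
      refine I.downward hsub (I.complete _ ?_ ?_)
      · refine lt_of_le_of_lt Cardinal.mk_image_le ?_
        have h1 : Cardinal.mk ↥({x}ᶜ : Set α) = (Fintype.card ↥({x}ᶜ : Set α) : Cardinal) :=
          Cardinal.mk_fintype _
        have h2 : Cardinal.mk α = (Fintype.card α : Cardinal) := Cardinal.mk_fintype _
        rw [h1, h2, Nat.cast_lt]
        have h3 : Fintype.card ↥({x}ᶜ : Set α) < Fintype.card ↥(Set.univ : Set α) := by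
          apply Set.card_lt_card
          rw [Set.ssubset_univ_iff]
          intro hc
          have : x ∈ ({x}ᶜ : Set α) := hc ▸ Set.mem_univ x
          exact this rfl
        calc Fintype.card ↥({x}ᶜ : Set α) < Fintype.card ↥(Set.univ : Set α) := h3
          _ ≤ Fintype.card α := Fintype.card_le_of_injective _ Subtype.val_injective
      · rintro X ⟨y, _, rfl⟩
        exact I.singleton_mem y
    have hAu : ∀ A ∈ 𝒜, A = Set.univ := by
      intro A hA
      by_contra h
      exact hanti.1 A hA (hproper A h)
    have hune : Set.univ ∈ 𝒜 := by
      by_contra h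
      have h1 : ∀ A ∈ 𝒜, A \ (∅ : Set α) ∈ I.carrier := by
        intro A hA'
        exact absurd (hAu A hA' ▸ hA') h
      have h2 := hmax ∅ h1
      rw [Set.diff_empty] at h2
      exact I.proper h2
    refine ⟨fun ξ => if ξ = f Set.univ then Set.univ else ∅, ?_, ?_, ?_⟩
    · refine (Set.eq_univ_of_forall ?_).symm
      intro x
      exact Set.mem_iUnion.2 ⟨f Set.univ, by simp⟩
    · intro ξ ζ hξζ
      by_cases h1 : ξ = f Set.univ
      · have h2 : ζ ≠ f Set.univ := fun h => hξζ (h1.trans h.symm)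
        simp [h1, h2]
      · simp [h1]
    · intro ξ
      by_cases h1 : ξ = f Set.univ
      · constructor
        · rintro A ⟨hA, _⟩
          simp only [if_pos h1, hAu A hA, Set.diff_self]
          exact hempty
        · intro W hW
          simp only [if_pos h1]
          exact hW Set.univ ⟨hune, h1.symm⟩
      · constructor
        · rintro A ⟨hA, hfA⟩
          exact absurd ((hAu A hA) ▸ hfA).symm h1
        · intro W _
          simp only [if_neg h1, Set.empty_diff]
          exact hempty
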